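/- Let T be a definitional tree of operation f and p a ground f-rooted pattern matched by no rule-node pattern of T. Then there exists an exempt node of T whose pattern matches p, and (by the uniqueness of the matching leaf) this exempt node is unique. -/

import Mathlib

/-!  A formalization of constructor-based term rewriting with definitional
trees, following Antoy's definitions.  Constructor and operation symbols are
natural numbers (disjoint by construction, since terms distinguish them);
constructors are grouped into types via `ctorType`. -/

/-- A signature: constructors (with type, arity and argument types) and
operations (with arity, argument types and result type). -/
structure Sig where
  ctorType : ℕ → ℕ
  ctorArity : ℕ → ℕ
  ctorArgTy : ℕ → ℕ → ℕ
  opArity : ℕ → ℕ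
  opArgTy : ℕ → ℕ → ℕ
  opResTy : ℕ → ℕ

namespace FLP

/-- Terms: variables (name and type annotation), constructor applications and
operation applications. -/
inductive Tm where
  | var : ℕ → ℕ → Tm
  | con : ℕ → List Tm → Tm
  | op  : ℕ → List Tm → Tm

/-- A substitution maps a variable (name and type) to a term. -/
def Subst := ℕ → ℕ → Tm

/-- Applying a substitution to a term. -/
def applySubst (σ : Subst) : Tm → Tm
  | .var v ty => σ v ty
  | .con c ts => .con c (ts.attach.map fun t => applySubst σ t.1)
  | .op f ts  => .op f (ts.attach.map fun t => applySubst σ t.1)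
decreasing_by
  all_goals (have h := List.sizeOf_lt_of_mem t.2; simp at h ⊢; omega)

/-- The list of variables (name, type) occurring in a term. -/
def varsOf : Tm → List (ℕ × ℕ)
  | .var v ty => [(v, ty)]
  | .con _ ts => ts.attach.flatMap fun t => varsOf t.1
  | .op _ ts  => ts.attach.flatMap fun t => varsOf t.1
decreasing_by
  all_goals (have h := List.sizeOf_lt_of_mem t.2; simp at h ⊢; omega)

/-- Ground terms: terms without variables. -/
inductive Ground : Tm → Prop
  | con : ∀ c ts, (∀ t ∈ ts, Ground t) → Ground (.con c ts)
  | op  : ∀ f ts, (∀ t ∈ ts, Ground t) → Ground (.op f ts)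

/-- Constructor terms: built from variables and constructor symbols only. -/
inductive CTerm : Tm → Prop
  | var : ∀ v ty, CTerm (.var v ty)
  | con : ∀ c ts, (∀ t ∈ ts, CTerm t) → CTerm (.con c ts)

/-- The typing judgment for terms. -/
inductive HasTy (S : Sig) : Tm → ℕ → Prop
  | var : ∀ v ty, HasTy S (.var v ty) ty
  | con : ∀ c ts, ts.length = S.ctorArity c →
      (∀ i (h : i < ts.length), HasTy S ts[i] (S.ctorArgTy c i)) →
      HasTy S (.con c ts) (S.ctorType c)
  | op : ∀ f ts, ts.length = S.opArity f →
      (∀ i (h : i < ts.length), HasTy S ts[i] (S.opArgTy f i)) →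
      HasTy S (.op f ts) (S.opResTy f)

/-- An `f`-rooted pattern: a linear, well-typed term `f t1 ... tn` whose
arguments are constructor terms. -/
def IsPat (S : Sig) (f : ℕ) (p : Tm) : Prop :=
  (∃ ts, p = .op f ts ∧ ∀ t ∈ ts, CTerm t) ∧
  ((varsOf p).map Prod.fst).Nodup ∧ HasTy S p (S.opResTy f)

/-- A ground `f`-rooted pattern. -/
def IsGroundPat (S : Sig) (f : ℕ) (p : Tm) : Prop :=
  IsPat S f p ∧ Ground p

/-- `q` matches `p` iff `p` is a substitution instance of `q`. -/
def Matches (q p : Tm) : Prop := ∃ σ : Subst, applySubst σ q = p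

/-- `q` unifies with `e` iff they have a common instance. -/
def Unifies (q e : Tm) : Prop :=
  ∃ σ τ : Subst, applySubst σ q = applySubst τ e

/-- The substitution replacing the variable named `x` by `t`. -/
def single (x : ℕ) (t : Tm) : Subst := fun v ty =>
  if v = x then t else .var v ty

/-- The substitution mapping the variables named by `xs` to the corresponding
terms of `ts`. -/
def substOf (xs : List ℕ) (ts : List Tm) : Subst := fun v ty =>
  match xs.findIdx? (· = v) with
  | some i => ts.getD i (.var v ty)
  | none => .var v ty

/-- Partial definitional trees: rule nodes `rule(p = r)`, exempt nodes
`exempt(p)`, and branch nodes storing their pattern, the name of the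
inductive variable, and one (constructor, subtree) pair per constructor of
the type of the inductive variable. -/
inductive DTree where
  | rule : Tm → Tm → DTree
  | exempt : Tm → DTree
  | branch : Tm → ℕ → List (ℕ × DTree) → DTree

/-- The pattern of the root node of a partial definitional tree. -/
def DTree.pat : DTree → Tm
  | .rule p _ => p
  | .exempt p => p
  | .branch p _ _ => p

/-- The patterns of the leaves of a partial definitional tree. -/
def DTree.leafPats : DTree → List Tm
  | .rule p _ => [p]
  | .exempt p => [p]
  | .branch _ _ cs => cs.attach.flatMap fun ct => ct.1.2.leafPats
decreasing_by
  all_goals (obtain ⟨⟨c', T'⟩, hm⟩ := ct;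
             have h := List.sizeOf_lt_of_mem hm; simp at h ⊢; omega)

/-- The patterns (left-hand sides) of the rule nodes. -/
def DTree.rulePats : DTree → List Tm
  | .rule p _ => [p]
  | .exempt _ => []
  | .branch _ _ cs => cs.attach.flatMap fun ct => ct.1.2.rulePats
decreasing_by
  all_goals (obtain ⟨⟨c', T'⟩, hm⟩ := ct;
             have h := List.sizeOf_lt_of_mem hm; simp at h ⊢; omega)

/-- The patterns of the exempt nodes. -/
def DTree.exemptPats : DTree → List Tm
  | .rule _ _ => []
  | .exempt p => [p]
  | .branch _ _ cs => cs.attach.flatMap fun ct => ct.1.2.exemptPats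
decreasing_by
  all_goals (obtain ⟨⟨c', T'⟩, hm⟩ := ct;
             have h := List.sizeOf_lt_of_mem hm; simp at h ⊢; omega)

/-- The rules contained in the rule nodes. -/
def DTree.rules : DTree → List (Tm × Tm)
  | .rule p r => [(p, r)]
  | .exempt _ => []
  | .branch _ _ cs => cs.attach.flatMap fun ct => ct.1.2.rules
decreasing_by
  all_goals (obtain ⟨⟨c', T'⟩, hm⟩ := ct;
             have h := List.sizeOf_lt_of_mem hm; simp at h ⊢; omega)

/-- Well-formed partial definitional trees w.r.t. a signature: at a branch
node with pattern `p` and inductive variable `x` (of type `ty`, occurring in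
`p`), there is exactly one child per constructor `c` of type `ty`, whose
pattern is obtained from `p` by substituting `x` with `c` applied to fresh
pairwise distinct variables. -/
inductive WF (S : Sig) : DTree → Prop
  | rule : ∀ p r, WF S (.rule p r)
  | exempt : ∀ p, WF S (.exempt p)
  | branch : ∀ p x ty (cs : List (ℕ × DTree)),
      (x, ty) ∈ varsOf p →
      (cs.map Prod.fst).Nodup →
      (∀ c, c ∈ cs.map Prod.fst ↔ S.ctorType c = ty) →
      (∀ ct ∈ cs, ∃ fresh : List (ℕ × ℕ),
          (fresh.map Prod.fst).Nodup ∧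
          fresh.length = S.ctorArity ct.1 ∧
          (∀ i (h : i < fresh.length), fresh[i].2 = S.ctorArgTy ct.1 i) ∧
          (∀ v ∈ fresh, v.1 ∉ (varsOf p).map Prod.fst) ∧
          (Prod.snd ct).pat =
            applySubst (single x (.con ct.1 (fresh.map fun v => Tm.var v.1 v.2))) p) →
      (∀ ct ∈ cs, WF S (Prod.snd ct)) →
      WF S (.branch p x cs)

/-- A definitional tree of the operation `f`: a well-formed partial
definitional tree whose root pattern is `f x1 ... xn` with pairwise distinct
(appropriately typed) variables. -/
def IsDTreeOf (S : Sig) (f : ℕ) (T : DTree) : Prop :=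
  WF S T ∧
  ∃ xs : List (ℕ × ℕ),
    (xs.map Prod.fst).Nodup ∧
    xs.length = S.opArity f ∧
    (∀ i (h : i < xs.length), xs[i].2 = S.opArgTy f i) ∧
    T.pat = .op f (xs.map fun v => Tm.var v.1 v.2)

/-- `Subtree N T` : `N` is a node (subtree) of `T`. -/
inductive Subtree : DTree → DTree → Prop
  | refl : ∀ T, Subtree T T
  | branch : ∀ p x cs ct N, ct ∈ cs → Subtree N (Prod.snd ct) →
      Subtree N (.branch p x cs)

/-- A tree has a rule node (somewhere, including its root). -/
inductive HasRule : DTree → Prop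
  | rule : ∀ p r, HasRule (.rule p r)
  | branch : ∀ p x cs ct, ct ∈ cs → HasRule (Prod.snd ct) →
      HasRule (.branch p x cs)

/-- A definitional tree is minimal iff there is some rule node below any
branch node of the tree. -/
def Minimal (T : DTree) : Prop :=
  ∀ p x cs, Subtree (.branch p x cs) T → HasRule (.branch p x cs)



/-! ### Auxiliary lemmas -/

theorem findIdx?_nodup : ∀ {l : List ℕ}, l.Nodup → ∀ {i : ℕ} (hi : i < l.length),
    l.findIdx? (· = l[i]) = some i
  | [], _, i, hi => by simp at hi
  | a :: l, h, 0, hi => by simp [List.findIdx?_cons]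
  | a :: l, h, i+1, hi => by
    have hi' : i < l.length := by simpa using hi
    have hmem : l[i] ∈ l := List.getElem_mem hi'
    have hne : a ≠ l[i] := fun e => (List.nodup_cons.mp h).1 (e ▸ hmem)
    simp only [List.findIdx?_cons, List.getElem_cons_succ]
    rw [if_neg (by simpa using fun e => hne e),
      findIdx?_nodup (List.nodup_cons.mp h).2 hi']
    rfl

@[simp] theorem applySubst_var (σ : Subst) (v ty : ℕ) :
    applySubst σ (.var v ty) = σ v ty := by rw [applySubst]

theorem applySubst_con (σ : Subst) (c : ℕ) (ts : List Tm) :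
    applySubst σ (.con c ts) = .con c (ts.map (applySubst σ)) := by
  rw [applySubst]; simp

theorem applySubst_op (σ : Subst) (f : ℕ) (ts : List Tm) :
    applySubst σ (.op f ts) = .op f (ts.map (applySubst σ)) := by
  rw [applySubst]; simp

@[simp] theorem varsOf_var (v ty : ℕ) : varsOf (.var v ty) = [(v, ty)] := by rw [varsOf]

theorem varsOf_con (c : ℕ) (ts : List Tm) :
    varsOf (.con c ts) = ts.flatMap varsOf := by rw [varsOf]; simp

theorem varsOf_op (f : ℕ) (ts : List Tm) :
    varsOf (.op f ts) = ts.flatMap varsOf := by rw [varsOf]; simp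

/-- Structural induction for `Tm` (nested inductive). -/
theorem Tm.my_induction {motive : Tm → Prop}
    (hvar : ∀ v ty, motive (.var v ty))
    (hcon : ∀ c ts, (∀ t ∈ ts, motive t) → motive (.con c ts))
    (hop : ∀ f ts, (∀ t ∈ ts, motive t) → motive (.op f ts)) : ∀ t, motive t
  | .var v ty => hvar v ty
  | .con c ts => hcon c ts (fun t ht => Tm.my_induction hvar hcon hop t)
  | .op f ts => hop f ts (fun t ht => Tm.my_induction hvar hcon hop t)
decreasing_by
  all_goals (have h := List.sizeOf_lt_of_mem ht; simp at h ⊢; omega)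

theorem applySubst_id (t : Tm) : applySubst (fun v ty => .var v ty) t = t := by
  induction t using Tm.my_induction with
  | hvar v ty => exact applySubst_var _ v ty
  | hcon c ts ih => rw [applySubst_con (fun v ty => .var v ty)]; exact congrArg _ (by rw [List.map_congr_left ih]; simp)
  | hop f ts ih => rw [applySubst_op (fun v ty => .var v ty)]; exact congrArg _ (by rw [List.map_congr_left ih]; simp)

theorem applySubst_comp (σ τ : Subst) (t : Tm) :
    applySubst τ (applySubst σ t) = applySubst (fun v ty => applySubst τ (σ v ty)) t := by
  induction t using Tm.my_induction with
  | hvar v ty => simp only [applySubst_var]; exact (applySubst_var (fun v ty => applySubst τ (σ v ty)) v ty).symm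
  | hcon c ts ih =>
      rw [applySubst_con, applySubst_con, applySubst_con (fun v ty => applySubst τ (σ v ty)), List.map_map]
      exact congrArg _ (List.map_congr_left ih)
  | hop f ts ih =>
      rw [applySubst_op, applySubst_op, applySubst_op (fun v ty => applySubst τ (σ v ty)), List.map_map]
      exact congrArg _ (List.map_congr_left ih)

theorem matches_trans {a b c : Tm} (h1 : Matches a b) (h2 : Matches b c) : Matches a c := by
  obtain ⟨σ, rfl⟩ := h1; obtain ⟨τ, rfl⟩ := h2
  exact ⟨_, (applySubst_comp σ τ a).symm⟩

theorem applySubst_congr {σ τ : Subst} {t : Tm}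
    (h : ∀ v ty, (v, ty) ∈ varsOf t → σ v ty = τ v ty) :
    applySubst σ t = applySubst τ t := by
  induction t using Tm.my_induction with
  | hvar v ty => simpa using h v ty (by simp)
  | hcon c ts ih =>
      rw [applySubst_con, applySubst_con]
      refine congrArg _ (List.map_congr_left fun t' ht' => ih t' ht' fun v ty hv => ?_)
      exact h v ty (by rw [varsOf_con]; exact List.mem_flatMap.mpr ⟨t', ht', hv⟩)
  | hop f ts ih =>
      rw [applySubst_op, applySubst_op]
      refine congrArg _ (List.map_congr_left fun t' ht' => ih t' ht' fun v ty hv => ?_)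
      exact h v ty (by rw [varsOf_op]; exact List.mem_flatMap.mpr ⟨t', ht', hv⟩)

theorem eq_on_vars {σ τ : Subst} {t : Tm}
    (h : applySubst σ t = applySubst τ t) :
    ∀ v ty, (v, ty) ∈ varsOf t → σ v ty = τ v ty := by
  induction t using Tm.my_induction with
  | hvar v ty => intro w tw hw; simp at hw; obtain ⟨rfl, rfl⟩ := hw; simpa using h
  | hcon c ts ih =>
      intro w tw hw
      rw [varsOf_con] at hw
      obtain ⟨t', ht', hv⟩ := List.mem_flatMap.mp hw
      rw [applySubst_con, applySubst_con] at h
      have := List.map_inj_left.mp (by injection h) t' ht'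
      exact ih t' ht' this w tw hv
  | hop f ts ih =>
      intro w tw hw
      rw [varsOf_op] at hw
      obtain ⟨t', ht', hv⟩ := List.mem_flatMap.mp hw
      rw [applySubst_op, applySubst_op] at h
      have := List.map_inj_left.mp (by injection h) t' ht'
      exact ih t' ht' this w tw hv

theorem ground_subst {σ : Subst} {t : Tm} (h : Ground (applySubst σ t)) :
    ∀ v ty, (v, ty) ∈ varsOf t → Ground (σ v ty) := by
  induction t using Tm.my_induction with
  | hvar v ty => intro w tw hw; simp at hw; obtain ⟨rfl, rfl⟩ := hw; simpa using h
  | hcon c ts ih =>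
      intro w tw hw
      rw [varsOf_con] at hw
      obtain ⟨t', ht', hv⟩ := List.mem_flatMap.mp hw
      rw [applySubst_con] at h
      cases h with
      | con _ _ hall => exact ih t' ht' (hall _ (List.mem_map_of_mem ht')) w tw hv
  | hop f ts ih =>
      intro w tw hw
      rw [varsOf_op] at hw
      obtain ⟨t', ht', hv⟩ := List.mem_flatMap.mp hw
      rw [applySubst_op] at h
      cases h with
      | op _ _ hall => exact ih t' ht' (hall _ (List.mem_map_of_mem ht')) w tw hv

theorem cterm_subst {σ : Subst} {t : Tm} (h : CTerm (applySubst σ t)) :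
    ∀ v ty, (v, ty) ∈ varsOf t → CTerm (σ v ty) := by
  induction t using Tm.my_induction with
  | hvar v ty => intro w tw hw; simp at hw; obtain ⟨rfl, rfl⟩ := hw; simpa using h
  | hcon c ts ih =>
      intro w tw hw
      rw [varsOf_con] at hw
      obtain ⟨t', ht', hv⟩ := List.mem_flatMap.mp hw
      rw [applySubst_con] at h
      cases h with
      | con _ _ hall => exact ih t' ht' (hall _ (List.mem_map_of_mem ht')) w tw hv
  | hop f ts ih =>
      intro w tw hw
      rw [applySubst_op] at h
      cases h

theorem cterm_applySubst {σ : Subst} {t : Tm} (h : CTerm t)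
    (hσ : ∀ v ty, CTerm (σ v ty)) : CTerm (applySubst σ t) := by
  induction t using Tm.my_induction with
  | hvar v ty => simpa using hσ v ty
  | hcon c ts ih =>
      rw [applySubst_con]
      cases h with
      | con _ _ hall =>
          exact CTerm.con _ _ fun t' ht' => by
            obtain ⟨u, hu, rfl⟩ := List.mem_map.mp ht'
            exact ih u hu (hall u hu)
  | hop f ts ih => cases h

theorem flatMap_congr {α β : Type*} {l : List α} {f g : α → List β}
    (h : ∀ a ∈ l, f a = g a) : l.flatMap f = l.flatMap g := by
  induction l with
  | nil => rfl
  | cons a l ih => simp_all [List.flatMap_cons]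

theorem varsOf_subst (σ : Subst) (t : Tm) :
    varsOf (applySubst σ t) = (varsOf t).flatMap (fun vt => varsOf (σ vt.1 vt.2)) := by
  induction t using Tm.my_induction with
  | hvar v ty => simp
  | hcon c ts ih =>
      rw [applySubst_con, varsOf_con, varsOf_con, List.flatMap_map, List.flatMap_assoc]
      exact flatMap_congr ih
  | hop f ts ih =>
      rw [applySubst_op, varsOf_op, varsOf_op, List.flatMap_map, List.flatMap_assoc]
      exact flatMap_congr ih

theorem hasTy_subst {S : Sig} {σ : Subst} {t : Tm} {A : ℕ} (h : HasTy S t A)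
    (hσ : ∀ v ty, (v, ty) ∈ varsOf t → HasTy S (σ v ty) ty) :
    HasTy S (applySubst σ t) A := by
  induction t using Tm.my_induction generalizing A with
  | hvar v ty => cases h; simpa using hσ v ty (by simp)
  | hcon c ts ih =>
      cases h with
      | con _ _ hlen hargs =>
          rw [applySubst_con]
          refine HasTy.con _ _ (by simpa using hlen) fun i hi => ?_
          have hi' : i < ts.length := by simpa using hi
          rw [List.getElem_map]
          refine ih ts[i] (List.getElem_mem hi') (hargs i hi') fun v ty hv => ?_
          exact hσ v ty (by rw [varsOf_con]; exact List.mem_flatMap.mpr ⟨ts[i], List.getElem_mem hi', hv⟩)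
  | hop f ts ih =>
      cases h with
      | op _ _ hlen hargs =>
          rw [applySubst_op]
          refine HasTy.op _ _ (by simpa using hlen) fun i hi => ?_
          have hi' : i < ts.length := by simpa using hi
          rw [List.getElem_map]
          refine ih ts[i] (List.getElem_mem hi') (hargs i hi') fun v ty hv => ?_
          exact hσ v ty (by rw [varsOf_op]; exact List.mem_flatMap.mpr ⟨ts[i], List.getElem_mem hi', hv⟩)

theorem hasTy_subst_inv {S : Sig} {σ : Subst} {t : Tm} {A : ℕ}
    (h1 : HasTy S t A) (h2 : HasTy S (applySubst σ t) A) :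
    ∀ v ty, (v, ty) ∈ varsOf t → HasTy S (σ v ty) ty := by
  induction t using Tm.my_induction generalizing A with
  | hvar v ty =>
      intro w tw hw; simp at hw; obtain ⟨rfl, rfl⟩ := hw
      cases h1; simpa using h2
  | hcon c ts ih =>
      intro w tw hw
      rw [varsOf_con] at hw
      obtain ⟨t', ht', hv⟩ := List.mem_flatMap.mp hw
      obtain ⟨i, hi, rfl⟩ := List.mem_iff_getElem.mp ht'
      rw [applySubst_con] at h2
      cases h1 with
      | con _ _ hlen hargs =>
          cases h2 with
          | con _ _ hlen2 hargs2 =>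
              have := hargs2 i (by simpa using hi)
              rw [List.getElem_map] at this
              exact ih ts[i] (List.getElem_mem hi) (hargs i hi) this w tw hv
  | hop f ts ih =>
      intro w tw hw
      rw [varsOf_op] at hw
      obtain ⟨t', ht', hv⟩ := List.mem_flatMap.mp hw
      obtain ⟨i, hi, rfl⟩ := List.mem_iff_getElem.mp ht'
      rw [applySubst_op] at h2
      cases h1 with
      | op _ _ hlen hargs =>
          cases h2 with
          | op _ _ hlen2 hargs2 =>
              have := hargs2 i (by simpa using hi)
              rw [List.getElem_map] at this
              exact ih ts[i] (List.getElem_mem hi) (hargs i hi) this w tw hv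

theorem attach_flatMap {α : Type*} {β : Type*} (l : List α) (f : α → List β) :
    l.attach.flatMap (fun x => f x.1) = l.flatMap f := by
  rw [List.flatMap, List.flatMap]; congr 1; simp

theorem DTree.leafPats_branch (p : Tm) (x : ℕ) (cs : List (ℕ × DTree)) :
    DTree.leafPats (.branch p x cs) = cs.flatMap (fun ct => ct.2.leafPats) := by
  rw [DTree.leafPats]; exact attach_flatMap cs (fun ct => ct.2.leafPats)

theorem DTree.rulePats_branch (p : Tm) (x : ℕ) (cs : List (ℕ × DTree)) :
    DTree.rulePats (.branch p x cs) = cs.flatMap (fun ct => ct.2.rulePats) := by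
  rw [DTree.rulePats]; exact attach_flatMap cs (fun ct => ct.2.rulePats)

theorem DTree.exemptPats_branch (p : Tm) (x : ℕ) (cs : List (ℕ × DTree)) :
    DTree.exemptPats (.branch p x cs) = cs.flatMap (fun ct => ct.2.exemptPats) := by
  rw [DTree.exemptPats]; exact attach_flatMap cs (fun ct => ct.2.exemptPats)

/-- Every leaf pattern is a rule pattern or an exempt pattern. -/
theorem leaf_mem_cases : ∀ (T : DTree) (q : Tm), q ∈ T.leafPats →
    q ∈ T.rulePats ∨ q ∈ T.exemptPats
  | .rule p r, q => by
      intro hq; left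
      simp only [DTree.leafPats] at hq; simpa [DTree.rulePats] using hq
  | .exempt p, q => by
      intro hq; right
      simp only [DTree.leafPats] at hq; simpa [DTree.exemptPats] using hq
  | .branch p x cs, q => by
      rw [DTree.leafPats_branch, DTree.rulePats_branch, DTree.exemptPats_branch]
      intro hq
      obtain ⟨ct, hct, hmem⟩ := List.mem_flatMap.mp hq
      rcases leaf_mem_cases ct.2 q hmem with h | h
      · exact Or.inl (List.mem_flatMap.mpr ⟨ct, hct, h⟩)
      · exact Or.inr (List.mem_flatMap.mpr ⟨ct, hct, h⟩)
termination_by T _ => sizeOf T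
decreasing_by
  all_goals (have h := List.sizeOf_lt_of_mem hct; obtain ⟨c', T'⟩ := ct; simp at h ⊢; omega)

/-- Every exempt pattern is a leaf pattern. -/
theorem exempt_mem_leaf : ∀ (T : DTree) (q : Tm), q ∈ T.exemptPats → q ∈ T.leafPats
  | .rule p r, q => by simp [DTree.exemptPats]
  | .exempt p, q => by simp [DTree.leafPats, DTree.exemptPats]
  | .branch p x cs, q => by
      rw [DTree.leafPats_branch, DTree.exemptPats_branch]
      intro hq
      obtain ⟨ct, hct, hmem⟩ := List.mem_flatMap.mp hq
      exact List.mem_flatMap.mpr ⟨ct, hct, exempt_mem_leaf ct.2 q hmem⟩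
termination_by T _ => sizeOf T
decreasing_by
  all_goals (have h := List.sizeOf_lt_of_mem hct; obtain ⟨c', T'⟩ := ct; simp at h ⊢; omega)

/-- The root pattern of a well-formed tree matches every leaf pattern. -/
theorem pat_matches_leaf {S : Sig} {T : DTree} (hwf : WF S T) :
    ∀ q ∈ T.leafPats, Matches T.pat q := by
  induction hwf with
  | rule p r =>
      intro q hq
      simp only [DTree.leafPats, List.mem_singleton] at hq; subst hq
      exact ⟨_, applySubst_id _⟩
  | exempt p =>
      intro q hq
      simp only [DTree.leafPats, List.mem_singleton] at hq; subst hq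
      exact ⟨_, applySubst_id _⟩
  | branch p x ty cs hx hnd hiff hch hwfs ih =>
      intro q hq
      rw [DTree.leafPats_branch] at hq
      obtain ⟨ct, hct, hmem⟩ := List.mem_flatMap.mp hq
      have h1 : Matches ct.2.pat q := ih ct hct q hmem
      obtain ⟨fresh, _, _, _, _, hpat⟩ := hch ct hct
      exact matches_trans ⟨_, hpat.symm⟩ h1

@[simp] theorem single_same (x : ℕ) (t : Tm) (ty : ℕ) : single x t x ty = t := by
  simp [single]

theorem single_other (x : ℕ) (t : Tm) {v : ℕ} (ty : ℕ) (h : v ≠ x) :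
    single x t v ty = .var v ty := by simp [single, h]

theorem varsOf_freshCon (c : ℕ) (fresh : List (ℕ × ℕ)) :
    varsOf (.con c (fresh.map fun v => .var v.1 v.2)) = fresh := by
  rw [varsOf_con, List.flatMap_map]; simp

theorem findIdx?_not_mem {l : List ℕ} {v : ℕ} (h : v ∉ l) : l.findIdx? (· = v) = none := by
  rw [List.findIdx?_eq_none_iff]; intro a ha; simp; rintro rfl; exact h ha

/-- Key lemma: a ground `f`-rooted pattern matched by the root pattern of a
well-formed tree is matched by exactly one leaf pattern. -/
theorem key_unique_leaf {S : Sig} {f : ℕ} {p : Tm} (hG : Ground p)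
    (hpTy : HasTy S p (S.opResTy f))
    (hpC : ∃ ps, p = .op f ps ∧ ∀ t ∈ ps, CTerm t) :
    ∀ {T : DTree}, WF S T →
      (∃ qs, T.pat = .op f qs ∧ ∀ t ∈ qs, CTerm t) →
      (∀ v t1 t2, (v, t1) ∈ varsOf T.pat → (v, t2) ∈ varsOf T.pat → t1 = t2) →
      HasTy S T.pat (S.opResTy f) →
      Matches T.pat p →
      ∃! q, q ∈ T.leafPats ∧ Matches q p := by
  intro T hwf
  induction hwf with
  | rule p0 r =>
      intro _ _ _ hM
      exact ⟨p0, ⟨by simp [DTree.leafPats], hM⟩, fun q hq => by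
        have := hq.1; simpa [DTree.leafPats] using this⟩
  | exempt p0 =>
      intro _ _ _ hM
      exact ⟨p0, ⟨by simp [DTree.leafPats], hM⟩, fun q hq => by
        have := hq.1; simpa [DTree.leafPats] using this⟩
  | branch p0 x ty cs hx hnd hiff hch hwfs ih =>
      intro hshape hcons hTy0 hM
      obtain ⟨σ0, hσ0⟩ := hM
      -- the image of the inductive variable
      have hgr : Ground (σ0 x ty) := ground_subst (hσ0 ▸ hG) x ty hx
      have hvty : HasTy S (σ0 x ty) ty := hasTy_subst_inv hTy0 (hσ0 ▸ hpTy) x ty hx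
      have hct0 : CTerm (σ0 x ty) := by
        obtain ⟨qs, hq, hqc⟩ := hshape
        obtain ⟨ps, hpps, hpc⟩ := hpC
        simp only [DTree.pat] at hq hσ0 hTy0 hcons
        rw [hq, varsOf_op] at hx
        obtain ⟨q', hq', hv⟩ := List.mem_flatMap.mp hx
        rw [hq, applySubst_op, hpps] at hσ0
        have hps : ps = qs.map (applySubst σ0) := by injection hσ0 with _ h; exact h.symm
        have : CTerm (applySubst σ0 q') := by
          rw [hps] at hpc; exact hpc _ (List.mem_map_of_mem hq')
        exact cterm_subst this x ty hv
      -- it is a constructor application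
      obtain ⟨c, ts, hcts⟩ : ∃ c ts, σ0 x ty = .con c ts := by
        rcases h : σ0 x ty with ⟨v, tv⟩ | ⟨c, ts⟩ | ⟨g, ts⟩
        · rw [h] at hgr; cases hgr
        · exact ⟨c, ts, rfl⟩
        · rw [h] at hct0; cases hct0
      rw [hcts] at hgr hvty
      have hcty : S.ctorType c = ty := by cases hvty; rfl
      have htslen : ts.length = S.ctorArity c := by cases hvty with | con _ _ h _ => exact h
      -- the child for `c`
      obtain ⟨ct, hct, hfst⟩ : ∃ ct ∈ cs, ct.1 = c := by
        have := (hiff c).mpr hcty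
        obtain ⟨ct, hm, he⟩ := List.mem_map.mp this
        exact ⟨ct, hm, he⟩
      obtain ⟨fresh, hfnd, hflen, hfty, hffr, hpat⟩ := hch ct hct
      rw [hfst] at hflen
      set u : Tm := .con ct.1 (fresh.map fun v => Tm.var v.1 v.2) with hu
      have hufresh : varsOf u = fresh := varsOf_freshCon _ _
      -- the matching substitution for the child
      set σ' : Subst := fun v tyv =>
        match (fresh.map Prod.fst).findIdx? (· = v) with
        | some i => ts.getD i (.var v tyv)
        | none => σ0 v tyv with hσ'def
      have hσ'fresh : ∀ i (hi : i < fresh.length), ∀ tyv, σ' fresh[i].1 tyv = ts[i]'(by omega) := by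
        intro i hi tyv
        have : (fresh.map Prod.fst).findIdx? (· = fresh[i].1) = some i := by
          have := findIdx?_nodup hfnd (l := fresh.map Prod.fst) (i := i) (by simpa using hi)
          simpa using this
        simp only [hσ'def, this]
        exact List.getD_eq_getElem ts _ (by omega)
      have hσ'old : ∀ v tyv, v ∈ (varsOf p0).map Prod.fst → σ' v tyv = σ0 v tyv := by
        intro v tyv hv
        have hnm : v ∉ fresh.map Prod.fst := by
          intro hmem
          obtain ⟨w, hw, he⟩ := List.mem_map.mp hmem
          exact hffr w hw (he ▸ hv)
        simp only [hσ'def, findIdx?_not_mem hnm]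
      have hsingle : ∀ v tyv, (v, tyv) ∈ varsOf p0 →
          applySubst σ' (single x u v tyv) = σ0 v tyv := by
        intro v tyv hv
        by_cases hvx : v = x
        · subst hvx
          have : tyv = ty := hcons v tyv ty hv hx
          subst this
          rw [single_same, hcts, hu, applySubst_con, List.map_map]
          congr 1
          refine List.ext_getElem (by simp; omega) fun i h1 h2 => ?_
          simp only [List.getElem_map, Function.comp]
          rw [applySubst_var]
          exact hσ'fresh i (by simpa using h1) _
        · rw [single_other x u tyv hvx, applySubst_var]
          exact hσ'old v tyv (List.mem_map_of_mem hv)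
      have hMc : Matches ct.2.pat p := by
        refine ⟨σ', ?_⟩
        rw [hpat, applySubst_comp, ← hσ0]
        exact applySubst_congr fun v tyv hv => hsingle v tyv hv
      -- invariants for the child pattern
      have hsubC : ∀ v tyv, CTerm (single x u v tyv) := by
        intro v tyv
        by_cases hvx : v = x
        · subst hvx; rw [single_same]
          exact CTerm.con _ _ fun t' ht' => by
            obtain ⟨w, _, rfl⟩ := List.mem_map.mp ht'; exact CTerm.var _ _
        · rw [single_other x u tyv hvx]; exact CTerm.var _ _
      have hshapeC : ∃ qs, ct.2.pat = .op f qs ∧ ∀ t ∈ qs, CTerm t := by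
        obtain ⟨qs, hq, hqc⟩ := hshape
        simp only [DTree.pat] at hq
        refine ⟨qs.map (applySubst (single x u)), by rw [hpat, hq, applySubst_op], ?_⟩
        intro t' ht'
        obtain ⟨t0, ht0, rfl⟩ := List.mem_map.mp ht'
        exact cterm_applySubst (hqc t0 ht0) hsubC
      have hmemvars : ∀ w tw, (w, tw) ∈ varsOf ct.2.pat →
          ((w, tw) ∈ fresh ∨ ((w, tw) ∈ varsOf p0 ∧ w ≠ x)) := by
        intro w tw hw
        rw [hpat, varsOf_subst] at hw
        obtain ⟨⟨v, tyv⟩, hv, hw'⟩ := List.mem_flatMap.mp hw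
        by_cases hvx : v = x
        · subst hvx
          rw [single_same, hufresh] at hw'
          exact Or.inl hw'
        · rw [single_other x u tyv hvx] at hw'
          simp at hw'
          obtain ⟨rfl, rfl⟩ := hw'
          exact Or.inr ⟨hv, hvx⟩
      have hconsC : ∀ v t1 t2, (v, t1) ∈ varsOf ct.2.pat → (v, t2) ∈ varsOf ct.2.pat → t1 = t2 := by
        intro v t1 t2 h1 h2
        rcases hmemvars v t1 h1 with hf1 | ⟨ho1, hx1⟩ <;>
          rcases hmemvars v t2 h2 with hf2 | ⟨ho2, hx2⟩
        · have := List.inj_on_of_nodup_map hfnd hf1 hf2 rfl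
          exact congrArg Prod.snd this
        · exact absurd (List.mem_map_of_mem (f := Prod.fst) ho2) (hffr (v, t1) hf1)
        · exact absurd (List.mem_map_of_mem (f := Prod.fst) ho1) (hffr (v, t2) hf2)
        · exact hcons v t1 t2 ho1 ho2
      have hTyC : HasTy S ct.2.pat (S.opResTy f) := by
        rw [hpat]
        refine hasTy_subst hTy0 fun v tyv hv => ?_
        by_cases hvx : v = x
        · subst hvx
          have : tyv = ty := hcons v tyv ty hv hx
          subst this
          rw [single_same]
          have : HasTy S u (S.ctorType ct.1) := by
            refine HasTy.con _ _ (by rw [hfst]; simpa using hflen) fun i hi => ?_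
            have hi' : i < fresh.length := by simpa using hi
            have := hfty i hi'
            rw [List.getElem_map]
            rw [hfst] at this ⊢
            exact this ▸ HasTy.var _ _
          rwa [hfst, hcty] at this
        · rw [single_other x u tyv hvx]; exact HasTy.var _ _
      -- existence from the induction hypothesis
      obtain ⟨q0, ⟨hq0mem, hq0M⟩, huniq⟩ := ih ct hct hshapeC hconsC hTyC hMc
      refine ⟨q0, ⟨?_, hq0M⟩, ?_⟩
      · rw [DTree.leafPats_branch]
        exact List.mem_flatMap.mpr ⟨ct, hct, hq0mem⟩
      · rintro q2 ⟨hq2mem, hq2M⟩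
        rw [DTree.leafPats_branch] at hq2mem
        obtain ⟨ct2, hct2, hq2mem'⟩ := List.mem_flatMap.mp hq2mem
        -- the child of q2 is the child for `c`
        have hM2 : Matches ct2.2.pat p :=
          matches_trans (pat_matches_leaf (hwfs ct2 hct2) q2 hq2mem') hq2M
        obtain ⟨θ, hθ⟩ := hM2
        obtain ⟨fresh2, _, _, _, _, hpat2⟩ := hch ct2 hct2
        rw [hpat2, applySubst_comp] at hθ
        have : applySubst θ (single x (.con ct2.1 (fresh2.map fun v => Tm.var v.1 v.2)) x ty)
            = σ0 x ty := eq_on_vars (hθ.trans hσ0.symm) x ty hx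
        rw [single_same, applySubst_con, hcts] at this
        have hc2 : ct2.1 = c := by injection this
        have : ct2 = ct := List.inj_on_of_nodup_map hnd hct2 hct (by rw [hc2, hfst])
        subst this
        exact huniq q2 ⟨hq2mem', hq2M⟩

/-- if no rule-node pattern of a definitional tree `T` of `f`
matches the ground `f`-rooted pattern `p`, then there is a unique exempt node
of `T` whose pattern matches `p`. -/
theorem exempt_exists_unique (S : Sig) (f : ℕ) (T : DTree)
    (hT : IsDTreeOf S f T)
    (p : Tm) (hp : IsGroundPat S f p)
    (hnorule : ∀ l ∈ T.rulePats, ¬ Matches l p) :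
    ∃! q, q ∈ T.exemptPats ∧ Matches q p := by
  obtain ⟨hwf, xs, hxnd, hxlen, hxty, hroot⟩ := hT
  obtain ⟨⟨⟨ps, hpps, hpc⟩, hpnd, hpTy⟩, hpG⟩ := hp
  have hvars : varsOf T.pat = xs := by
    rw [hroot, varsOf_op, List.flatMap_map]; simp
  have hshape : ∃ qs, T.pat = .op f qs ∧ ∀ t ∈ qs, CTerm t :=
    ⟨_, hroot, fun t ht => by
      obtain ⟨v, _, rfl⟩ := List.mem_map.mp ht; exact CTerm.var _ _⟩
  have hcons : ∀ v t1 t2, (v, t1) ∈ varsOf T.pat → (v, t2) ∈ varsOf T.pat → t1 = t2 := by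
    intro v t1 t2 h1 h2
    rw [hvars] at h1 h2
    exact congrArg Prod.snd (List.inj_on_of_nodup_map hxnd h1 h2 rfl)
  have hTy0 : HasTy S T.pat (S.opResTy f) := by
    rw [hroot]
    refine HasTy.op _ _ (by simpa using hxlen) fun i hi => ?_
    have hi' : i < xs.length := by simpa using hi
    rw [List.getElem_map]
    exact (hxty i hi') ▸ HasTy.var _ _
  have hplen : ps.length = S.opArity f := by
    rw [hpps] at hpTy; cases hpTy with | op _ _ h _ => exact h
  have hM : Matches T.pat p := by
    refine ⟨substOf (xs.map Prod.fst) ps, ?_⟩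
    rw [hroot, applySubst_op, hpps, List.map_map]
    congr 1
    refine List.ext_getElem (by simp; omega) fun i h1 h2 => ?_
    have hi' : i < xs.length := by simpa using h1
    simp only [List.getElem_map, Function.comp]
    rw [applySubst_var]
    have hfi : (xs.map Prod.fst).findIdx? (· = xs[i].1) = some i := by
      have := findIdx?_nodup hxnd (l := xs.map Prod.fst) (i := i) (by simpa using hi')
      simpa using this
    simp only [substOf, hfi]
    exact List.getD_eq_getElem ps _ (by omega)
  obtain ⟨q0, ⟨hq0l, hq0M⟩, huq⟩ :=
    key_unique_leaf hpG hpTy ⟨ps, hpps, hpc⟩ hwf hshape hcons hTy0 hM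
  have hq0e : q0 ∈ T.exemptPats := by
    rcases leaf_mem_cases T q0 hq0l with h | h
    · exact absurd hq0M (hnorule q0 h)
    · exact h
  refine ⟨q0, ⟨hq0e, hq0M⟩, ?_⟩
  rintro q2 ⟨hq2e, hq2M⟩
  exact huq q2 ⟨exempt_mem_leaf T q2 hq2e, hq2M⟩

end FLP
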